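/- Let X and Y be finite simple graphs. There is a quantum homomorphism from X to Y if and only if there exist d ≥ 1 and a graph homomorphism from X to M(Y,d), where M(Y,d) is the simple graph whose vertices are the functions p : V(Y) → M_d(ℂ) such that every p(y) is a projector (Hermitian idempotent) and Σ_{y ∈ V(Y)} p(y) = I, with distinct vertices p and p' adjacent if and only if p(y)·p'(y') = 0 for all pairs y, y' ∈ V(Y) that are equal or nonadjacent in Y. -/

import Mathlib

open Matrix Finset

/-- A quantum homomorphism from `X` to `Y`: for some `d ≥ 1` there are complex `d × d`
projectors `E x y` (Hermitian idempotents) with `∑ y, E x y = 1` for every `x`,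
`E x y * E x y' = 0` whenever `y ≠ y'`, and `E x y * E x' y' = 0` whenever `x, x'`
are adjacent in `X` and `y, y'` are equal or nonadjacent in `Y`. -/
def IsQuantumHom {V W : Type} [Fintype V] [Fintype W]
    (X : SimpleGraph V) (Y : SimpleGraph W) : Prop :=
  ∃ d : ℕ, 0 < d ∧ ∃ E : V → W → Matrix (Fin d) (Fin d) ℂ,
    (∀ x y, (E x y).IsHermitian ∧ E x y * E x y = E x y) ∧
    (∀ x, ∑ y, E x y = 1) ∧
    (∀ x y y', y ≠ y' → E x y * E x y' = 0) ∧
    (∀ x x' y y', X.Adj x x' → ¬ Y.Adj y y' → E x y * E x' y' = 0)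


/-- The graph `M(Y,d)`: vertices are projective measurements `p : V(Y) → M_d(ℂ)`
(each `p y` a projector, summing to the identity), with distinct `p, p'` adjacent iff
`p y * p' y' = 0` for all pairs `y, y'` that are equal or nonadjacent in `Y`. -/
def MGraph {W : Type} [Fintype W] (Y : SimpleGraph W) (d : ℕ) :
    SimpleGraph {p : W → Matrix (Fin d) (Fin d) ℂ //
      (∀ y, (p y).IsHermitian ∧ p y * p y = p y) ∧ ∑ y, p y = 1} where
  Adj p q := p ≠ q ∧ ∀ y y', ¬ Y.Adj y y' → p.1 y * q.1 y' = 0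
  symm := ⟨by
    rintro ⟨p, hp, _⟩ ⟨q, hq, _⟩ ⟨hne, h⟩
    refine ⟨hne.symm, fun y y' hyy' => ?_⟩
    have h1 : p y' * q y = 0 := h y' y (fun a => hyy' a.symm)
    have h2 := congrArg Matrix.conjTranspose h1
    show q y * p y' = 0
    rwa [Matrix.conjTranspose_mul, (hq y).1, (hp y').1, Matrix.conjTranspose_zero] at h2⟩
  loopless := ⟨fun p hp => hp.1 rfl⟩


open Matrix Finset

lemma meas_orth {W : Type} [Fintype W] {d : ℕ} (p : W → Matrix (Fin d) (Fin d) ℂ)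
    (hp : ∀ y, (p y).IsHermitian ∧ p y * p y = p y) (hs : ∑ y, p y = 1)
    {y y' : W} (h : y ≠ y') : p y * p y' = 0 := by
  classical
  set A : W → Matrix (Fin d) (Fin d) ℂ := fun j => p j * p y with hAdef
  have heq : ∀ j, p y * p j * p y = (A j)ᴴ * (A j) := by
    intro j
    rw [conjTranspose_mul, (hp j).1, (hp y).1]
    conv_rhs => rw [mul_assoc, ← mul_assoc (p j), (hp j).2, ← mul_assoc]
  have key : ∑ j ∈ univ.erase y, (A j)ᴴ * (A j) = 0 := by
    have h1 : ∑ j : W, p y * p j * p y = p y := by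
      rw [← Finset.sum_mul, ← Finset.mul_sum, hs, mul_one, (hp y).2]
    have h2 : ∑ j : W, p y * p j * p y
        = p y * p y * p y + ∑ j ∈ univ.erase y, p y * p j * p y := by
      rw [← Finset.add_sum_erase _ _ (Finset.mem_univ y)]
    have h3 : p y * p y * p y = p y := by rw [(hp y).2, (hp y).2]
    rw [h2, h3] at h1
    have h4 : ∑ j ∈ univ.erase y, p y * p j * p y = 0 := by
      have := add_eq_left.mp h1
      exact this
    rw [← h4]
    exact Finset.sum_congr rfl fun j _ => (heq j).symm
  have hA : ∀ j ∈ univ.erase y, A j = 0 := by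
    intro j0 hj0
    ext i k
    have hkey := congrFun (congrFun key k) k
    simp only [Matrix.sum_apply, Matrix.zero_apply, Matrix.mul_apply,
      Matrix.conjTranspose_apply] at hkey
    have hcast : ∀ j ∈ univ.erase y,
        ∑ i', star ((A j) i' k) * (A j) i' k
          = ((∑ i', Complex.normSq ((A j) i' k) : ℝ) : ℂ) := by
      intro j _
      push_cast
      exact Finset.sum_congr rfl fun i' _ => by
        rw [Complex.star_def, ← Complex.normSq_eq_conj_mul_self]
    rw [Finset.sum_congr rfl hcast] at hkey
    have hre : ∑ j ∈ univ.erase y, ∑ i', Complex.normSq ((A j) i' k) = 0 := by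
      exact_mod_cast hkey
    have hj := (Finset.sum_eq_zero_iff_of_nonneg (fun j _ =>
      Finset.sum_nonneg fun i' _ => Complex.normSq_nonneg _)).mp hre j0 hj0
    have hik := (Finset.sum_eq_zero_iff_of_nonneg (fun i' _ =>
      Complex.normSq_nonneg _)).mp hj i (Finset.mem_univ i)
    simpa using Complex.normSq_eq_zero.mp hik
  have h0 : p y' * p y = 0 := hA y' (Finset.mem_erase.mpr ⟨Ne.symm h, Finset.mem_univ _⟩)
  have h2 := congrArg Matrix.conjTranspose h0
  rwa [Matrix.conjTranspose_mul, (hp y).1, (hp y').1, Matrix.conjTranspose_zero] at h2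

/-- `X →q Y` iff `X` has a graph homomorphism to `M(Y,d)` for some `d ≥ 1`. -/
theorem quantumHom_iff_hom_MGraph {V W : Type} [Fintype V] [Fintype W]
    (X : SimpleGraph V) (Y : SimpleGraph W) :
    IsQuantumHom X Y ↔ ∃ d : ℕ, 1 ≤ d ∧ Nonempty (X →g MGraph Y d) := by
  constructor
  · rintro ⟨d, hd, E, hproj, hsum, -, hadj⟩
    refine ⟨d, hd, ⟨⟨fun x => ⟨E x, fun y => hproj x y, hsum x⟩, ?_⟩⟩⟩
    intro x x' hxx'
    refine ⟨?_, fun y y' hyy' => hadj x x' y y' hxx' hyy'⟩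
    intro hEq
    have hval : E x = E x' := congrArg Subtype.val hEq
    have i : Fin d := ⟨0, hd⟩
    have hz : ∀ y, E x y = 0 := by
      intro y
      have h0 : E x y * E x y = 0 := by
        conv_lhs => rw [hval]
        conv_lhs => rw [show E x' y = E x' y from rfl]
        have := hadj x x' y y hxx' (Y.loopless.irrefl y)
        rw [← hval] at this ⊢
        exact this
      rw [(hproj x y).2] at h0
      exact h0
    have h1 : (0 : Matrix (Fin d) (Fin d) ℂ) = 1 := by
      rw [← hsum x]
      exact (Finset.sum_eq_zero fun y _ => hz y).symm
    have := congrFun (congrFun h1 i) i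
    simp at this
  · rintro ⟨d, hd, ⟨f⟩⟩
    refine ⟨d, hd, fun x => (f x).1, fun x y => (f x).2.1 y, fun x => (f x).2.2, ?_, ?_⟩
    · intro x y y' hne
      exact meas_orth (f x).1 (f x).2.1 (f x).2.2 hne
    · intro x x' y y' hxx' hyy'
      exact (f.map_rel' hxx').2 y y' hyy'
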